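/- Let G be a finite group, A, B ≤ G with G = AB, and suppose [A, B] ≤ F(G), the Fitting subgroup of G. Then for all a ∈ A and b ∈ B, the subgroup ⟨a, b⟩ has nilpotent derived subgroup. -/

import Mathlib

/-- The Fitting subgroup: the join of all nilpotent normal subgroups. -/
def FittingSubgroup (G : Type*) [Group G] : Subgroup G :=
  ⨆ N : {N : Subgroup G // N.Normal ∧ Group.IsNilpotent N}, (N : Subgroup G)

section Aux

variable {G : Type*} [Group G]

theorem fitting_normal : (FittingSubgroup G).Normal := by
  constructor
  intro x hx g
  refine Subgroup.iSup_induction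
    (fun N : {N : Subgroup G // N.Normal ∧ Group.IsNilpotent N} => (N : Subgroup G))
    (C := fun y => g * y * g⁻¹ ∈ FittingSubgroup G) hx ?_ ?_ ?_
  · intro N y hy
    have h1 : g * y * g⁻¹ ∈ (N : Subgroup G) := N.2.1.conj_mem y hy g
    exact le_iSup
      (fun N : {N : Subgroup G // N.Normal ∧ Group.IsNilpotent N} => (N : Subgroup G)) N h1
  · simpa using (FittingSubgroup G).one_mem
  · intro a b ha hb
    have h : g * (a * b) * g⁻¹ = (g * a * g⁻¹) * (g * b * g⁻¹) := by group
    rw [h]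
    exact mul_mem ha hb

theorem exists_max_pgroup [Finite G] (p : ℕ) :
    ∃ M : Subgroup G, M.Normal ∧ IsPGroup p M ∧
      ∀ P : Subgroup G, P.Normal → IsPGroup p P → P ≤ M := by
  classical
  let S : Set (Subgroup G) := {P | P.Normal ∧ IsPGroup p P}
  have hS : S.Finite := Set.toFinite S
  have hne : S.Nonempty := ⟨⊥, inferInstance, IsPGroup.of_bot⟩
  obtain ⟨M, hM, hmax⟩ : ∃ M ∈ S, ∀ P ∈ S, M ≤ P → M = P := by
    obtain ⟨M, hM⟩ := hS.exists_maximal hne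
    exact ⟨M, hM.1, fun P hP h => le_antisymm h (hM.2 hP h)⟩
  refine ⟨M, hM.1, hM.2, fun P hPn hPp => ?_⟩
  haveI := hM.1
  haveI := hPn
  have hsup : P ⊔ M ∈ S := ⟨Subgroup.sup_normal P M, IsPGroup.to_sup_of_normal_right hPp hM.2⟩
  have : M = P ⊔ M := hmax _ hsup le_sup_right
  exact le_sup_left.trans this.ge

theorem mem_normal_pgroup [Finite G] (N : Subgroup G) (hN : N.Normal)
    (hnil : Group.IsNilpotent N) {q : ℕ} (hq : q.Prime) {e : ℕ} {g : G}
    (hg : g ∈ N) (hord : orderOf g ∣ q ^ e) :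
    ∃ Q : Subgroup G, Q.Normal ∧ IsPGroup q Q ∧ g ∈ Q := by
  haveI : Fact q.Prime := ⟨hq⟩
  set x : N := ⟨g, hg⟩ with hxdef
  have hx : orderOf x ∣ q ^ e := by
    rw [← orderOf_injective N.subtype N.subtype_injective x]
    exact hord
  have hx1 : x ^ (q ^ e) = 1 := orderOf_dvd_iff_pow_eq_one.mp hx
  have hzp : IsPGroup q (Subgroup.zpowers x) := by
    intro z
    refine ⟨e, ?_⟩
    have hz : ((z : N)) ^ (q ^ e) = 1 := by
      obtain ⟨k, hk⟩ := Subgroup.mem_zpowers_iff.mp z.2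
      rw [← hk, ← zpow_natCast (x ^ k), ← zpow_mul, mul_comm k ((q ^ e : ℕ) : ℤ), zpow_mul,
        zpow_natCast, hx1, one_zpow]
    exact Subtype.ext (by simpa using hz)
  obtain ⟨P, hP⟩ := hzp.exists_le_sylow
  have hPnorm : (↑P : Subgroup N).Normal :=
    by
    have h04 := (isNilpotent_of_finite_tfae (G := ↥N)).out 0 3
    exact h04.mp hnil q ⟨hq⟩ P
  haveI := hPnorm
  haveI : (↑P : Subgroup N).Characteristic := Sylow.characteristic_of_normal P hPnorm
  haveI := hN
  refine ⟨(↑P : Subgroup N).map N.subtype, inferInstance, P.isPGroup'.map _, ?_⟩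
  exact ⟨x, hP (Subgroup.mem_zpowers x), rfl⟩

theorem fitting_isNilpotent [Finite G] : Group.IsNilpotent (FittingSubgroup G) := by
  classical
  have hcard : Nat.card G ≠ 0 := Nat.card_pos.ne'
  choose M hMnorm hMp hMmax using fun p => exists_max_pgroup (G := G) p
  set ps := (Nat.card G).primeFactors with hps
  set D : Subgroup G := ⨆ p : ps, M p with hD
  have hprime : ∀ p : ps, Fact (Nat.Prime (p : ℕ)) :=
    fun p => ⟨Nat.prime_of_mem_primeFactors p.2⟩
  have hcomm : Pairwise fun (i j : ps) => ∀ x y : G, x ∈ M i → y ∈ M j → Commute x y := by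
    intro i j hij
    haveI := hprime i; haveI := hprime j
    exact Subgroup.commute_of_normal_of_disjoint _ _ (hMnorm i) (hMnorm j)
      (IsPGroup.disjoint_of_ne i j (Subtype.val_injective.ne hij) _ _ (hMp i) (hMp j))
  have hDnil : Group.IsNilpotent D := by
    haveI : ∀ p : ps, Group.IsNilpotent (M p) := fun p => by
      haveI := hprime p; exact (hMp p).isNilpotent
    let f := Subgroup.noncommPiCoprod hcomm
    have hrange : f.range = D := Subgroup.noncommPiCoprod_range
    have hnr : Group.IsNilpotent f.range :=
      nilpotent_of_surjective f.rangeRestrict f.rangeRestrict_surjective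
    rwa [hrange] at hnr
  have hFD : FittingSubgroup G ≤ D := by
    refine iSup_le ?_
    rintro ⟨N, hNnorm, hNnil⟩
    intro g hg
    have key : ∀ n : ℕ, ∀ g ∈ N, orderOf g = n → g ∈ D := by
      intro n
      induction n using Nat.strong_induction_on with
      | _ n ih =>
        intro g hg hord
        by_cases h1 : orderOf g = 1
        · rw [orderOf_eq_one_iff.mp h1]; exact one_mem D
        have hn0 : n ≠ 0 := by rw [← hord]; exact (orderOf_pos g).ne'
        set q := n.minFac with hqdef
        have hq : q.Prime := Nat.minFac_prime (hord ▸ h1)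
        haveI : Fact q.Prime := ⟨hq⟩
        set e := n.factorization q with hedef
        have he : 0 < e := hq.factorization_pos_of_dvd hn0 n.minFac_dvd
        have hQdvd : q ^ e ∣ n := Nat.ordProj_dvd n q
        set m := n / q ^ e with hmdef
        have hnm : q ^ e * m = n := Nat.mul_div_cancel' hQdvd
        have hm0 : m ≠ 0 := by
          intro h; rw [h, mul_zero] at hnm; exact hn0 hnm.symm
        have hco : Nat.Coprime (q ^ e) m :=
          Nat.Coprime.pow_left _ (Nat.coprime_ordCompl hq hn0)
        have hicop : IsCoprime (((q ^ e : ℕ)) : ℤ) ((m : ℕ) : ℤ) := by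
          rw [Int.isCoprime_iff_gcd_eq_one, Int.gcd_natCast_natCast]
          exact hco
        obtain ⟨u, v, huv⟩ := hicop
        set x : G := g ^ (v * ((m : ℕ) : ℤ)) with hxdef
        set y : G := g ^ (u * (((q ^ e : ℕ)) : ℤ)) with hydef
        have hgyx : g = y * x := by
          rw [hydef, hxdef, ← zpow_add, huv, zpow_one]
        have hxN : x ∈ N := N.zpow_mem hg _
        have hyN : y ∈ N := N.zpow_mem hg _
        have hgn : g ^ ((n : ℤ)) = 1 := by
          rw [zpow_natCast, ← hord, pow_orderOf_eq_one]
        have hxord : orderOf x ∣ q ^ e := by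
          apply orderOf_dvd_of_pow_eq_one
          rw [hxdef, ← zpow_natCast, ← zpow_mul]
          have h5 : v * ((m : ℕ) : ℤ) * (((q ^ e : ℕ)) : ℤ) = (n : ℤ) * v := by
            push_cast [← hnm]; ring
          rw [h5, zpow_mul, hgn, one_zpow]
        have hyord : orderOf y ∣ m := by
          apply orderOf_dvd_of_pow_eq_one
          rw [hydef, ← zpow_natCast, ← zpow_mul]
          have h5 : u * (((q ^ e : ℕ)) : ℤ) * ((m : ℕ) : ℤ) = (n : ℤ) * u := by
            push_cast [← hnm]; ring
          rw [h5, zpow_mul, hgn, one_zpow]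
        -- x lies in D
        have hxD : x ∈ D := by
          obtain ⟨Q, hQn, hQp, hxQ⟩ := mem_normal_pgroup N hNnorm hNnil hq hxN hxord
          have hqps : q ∈ ps := by
            rw [hps, Nat.mem_primeFactors]
            exact ⟨hq, n.minFac_dvd.trans (hord ▸ orderOf_dvd_natCard g), hcard⟩
          have hQM : Q ≤ M q := hMmax q Q hQn hQp
          exact (hQM.trans (le_iSup (fun p : ps => M p) ⟨q, hqps⟩)) hxQ
        -- y lies in D by induction
        have hyD : y ∈ D := by
          have hmn : m < n := by
            rw [hmdef]
            exact Nat.div_lt_self (Nat.pos_of_ne_zero hn0) (Nat.one_lt_pow he.ne' hq.one_lt)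
          have hle : orderOf y ≤ m := Nat.le_of_dvd (Nat.pos_of_ne_zero hm0) hyord
          exact ih (orderOf y) (lt_of_le_of_lt hle hmn) y hyN rfl
        rw [hgyx]; exact mul_mem hyD hxD
    exact key (orderOf g) g hg rfl
  haveI := hDnil
  exact nilpotent_of_mulEquiv (Subgroup.subgroupOfEquivOfLe hFD)

end Aux

open scoped commutatorElement

theorem stmt_12 {G : Type*} [Group G] [Finite G] (A B : Subgroup G)
    (hG : ∀ g : G, ∃ a ∈ A, ∃ b ∈ B, g = a * b)
    (hcomm : ⁅A, B⁆ ≤ FittingSubgroup G) :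
    ∀ a ∈ A, ∀ b ∈ B,
      Group.IsNilpotent
        ↥⁅Subgroup.closure {a, b}, Subgroup.closure {a, b}⁆ := by
  intro a ha b hb
  haveI : (FittingSubgroup G).Normal := fitting_normal
  set F := FittingSubgroup G with hF
  set H := Subgroup.closure ({a, b} : Set G) with hH
  have hab : ⁅a, b⁆ ∈ F := hcomm (Subgroup.commutator_mem_commutator ha hb)
  have hHF : ⁅H, H⁆ ≤ F := by
    rw [Subgroup.commutator_le]
    intro x hx y hy
    let π : G →* G ⧸ F := QuotientGroup.mk' F
    have hcab : Commute (π a) (π b) := by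
      rw [← commutatorElement_eq_one_iff_commute, ← map_commutatorElement]
      exact (QuotientGroup.eq_one_iff _).mpr hab
    have hcent : Subgroup.closure ({π a, π b} : Set (G ⧸ F)) ≤
        Subgroup.centralizer ({π a, π b} : Set (G ⧸ F)) := by
      rw [Subgroup.closure_le]
      rintro z (rfl | rfl) <;>
        rw [SetLike.mem_coe, Subgroup.mem_centralizer_iff] <;>
        rintro w (rfl | rfl)
      · rfl
      · exact hcab.eq.symm
      · exact hcab.eq
      · rfl
    have hmap : ∀ w ∈ H, π w ∈ Subgroup.closure ({π a, π b} : Set (G ⧸ F)) := by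
      intro w hw
      have : π w ∈ Subgroup.map π H := ⟨w, hw, rfl⟩
      rwa [hH, MonoidHom.map_closure, Set.image_insert_eq, Set.image_singleton] at this
    have hxc := hmap x hx
    have hyc := hmap y hy
    -- show the images commute
    have hyy : ∀ s ∈ ({π a, π b} : Set (G ⧸ F)), s ∈ Subgroup.centralizer {π y} := by
      intro s hs
      rw [Subgroup.mem_centralizer_iff]
      rintro w rfl
      exact ((Subgroup.mem_centralizer_iff.mp (hcent hyc)) s hs).symm
    have hxy : π x ∈ Subgroup.centralizer {π y} := by
      have : Subgroup.closure ({π a, π b} : Set (G ⧸ F)) ≤ Subgroup.centralizer {π y} := by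
        rw [Subgroup.closure_le]; intro s hs; exact hyy s hs
      exact this hxc
    have hcxy : Commute (π x) (π y) := by
      have h6 := Subgroup.mem_centralizer_iff.mp hxy (π y) rfl
      exact h6.symm
    rw [← QuotientGroup.eq_one_iff (N := F) ⁅x, y⁆]
    show π ⁅x, y⁆ = 1
    rw [map_commutatorElement, commutatorElement_eq_one_iff_commute]
    exact hcxy
  haveI : Group.IsNilpotent F := fitting_isNilpotent
  exact nilpotent_of_mulEquiv (Subgroup.subgroupOfEquivOfLe hHF)
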